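/- Let A : ℝ → ℝ be continuously differentiable with antiderivative IA (IA′ = A). Let u, v¹, v² : ℝ² → ℝ be continuously differentiable functions satisfying simultaneously ∂_x v¹ = u, ∂_t v¹ = A(u)·∂_x u, ∂_x v² = x·u, and ∂_t v² = x·A(u)·∂_x u − IA(u) at every point of ℝ². Then the function w := x·v¹ − v² satisfies ∂_x w = v¹ and ∂_t w = IA(u) at every point of ℝ². (Consequently the second-level potential system v¹_x = u, w_x = v¹, w_t = ∫A obtained from the simplest potential conservation law with density v¹ is locally equivalent to the united first-level potential system constructed with the pair of independent local conservation laws, and that potential conservation law is trivial on the manifold of the united system.) -/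

import Mathlib

/-- Partial derivative with respect to the first (time) variable. -/
noncomputable def pT (f : ℝ → ℝ → ℝ) (t x : ℝ) : ℝ := deriv (fun s => f s x) t

/-- Partial derivative with respect to the second (space) variable. -/
noncomputable def pX (f : ℝ → ℝ → ℝ) (t x : ℝ) : ℝ := deriv (fun y => f t y) x

lemma diffX {f : ℝ → ℝ → ℝ} (hf : ContDiff ℝ 1 (fun p : ℝ × ℝ => f p.1 p.2))
    (t x : ℝ) : DifferentiableAt ℝ (fun y => f t y) x := by
  have := (hf.differentiable one_ne_zero (t, x)).comp x
    ((differentiableAt_const t).prodMk differentiableAt_id)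
  exact this

lemma diffT {f : ℝ → ℝ → ℝ} (hf : ContDiff ℝ 1 (fun p : ℝ × ℝ => f p.1 p.2))
    (t x : ℝ) : DifferentiableAt ℝ (fun s => f s x) t := by
  have := (hf.differentiable one_ne_zero (t, x)).comp t
    ((differentiableAt_id (𝕜 := ℝ) (x := t)).prodMk (differentiableAt_const x))
  exact this

/-- For the diffusion equation `u_t = (A(u)u_x)_x`, the second-level potential
`w = x v¹ − v²` built from the united first-level potential system satisfies
`w_x = v¹`, `w_t = ∫A`. -/
theorem second_level_potential_diffusion
    (A IA : ℝ → ℝ) (hA : ContDiff ℝ 1 A) (hIA : ∀ w : ℝ, HasDerivAt IA (A w) w)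
    (u v1 v2 : ℝ → ℝ → ℝ)
    (hu : ContDiff ℝ 1 (fun p : ℝ × ℝ => u p.1 p.2))
    (hv1 : ContDiff ℝ 1 (fun p : ℝ × ℝ => v1 p.1 p.2))
    (hv2 : ContDiff ℝ 1 (fun p : ℝ × ℝ => v2 p.1 p.2))
    (hv1x : ∀ t x : ℝ, pX v1 t x = u t x)
    (hv1t : ∀ t x : ℝ, pT v1 t x = A (u t x) * pX u t x)
    (hv2x : ∀ t x : ℝ, pX v2 t x = x * u t x)
    (hv2t : ∀ t x : ℝ, pT v2 t x = x * A (u t x) * pX u t x - IA (u t x)) :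
    ∀ t x : ℝ,
      pX (fun t x => x * v1 t x - v2 t x) t x = v1 t x ∧
      pT (fun t x => x * v1 t x - v2 t x) t x = IA (u t x) := by
  intro t x
  constructor
  · have h1 : HasDerivAt (fun y => v1 t y) (pX v1 t x) x :=
      (diffX hv1 t x).hasDerivAt
    have h2 : HasDerivAt (fun y => v2 t y) (pX v2 t x) x :=
      (diffX hv2 t x).hasDerivAt
    have hid : HasDerivAt (fun y : ℝ => y) 1 x := hasDerivAt_id x
    have h : HasDerivAt (fun y => y * v1 t y - v2 t y)
        (1 * v1 t x + x * pX v1 t x - pX v2 t x) x := (hid.mul h1).sub h2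
    have := h.deriv
    simp only [pX] at *
    rw [this, hv1x, hv2x]
    ring
  · have h1 : HasDerivAt (fun s => v1 s x) (pT v1 t x) t :=
      (diffT hv1 t x).hasDerivAt
    have h2 : HasDerivAt (fun s => v2 s x) (pT v2 t x) t :=
      (diffT hv2 t x).hasDerivAt
    have h : HasDerivAt (fun s => x * v1 s x - v2 s x)
        (x * pT v1 t x - pT v2 t x) t := (h1.const_mul x).sub h2
    have := h.deriv
    simp only [pT] at *
    rw [this, hv1t, hv2t]
    ring
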